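/- arXiv:1607.03005 — 2 statements merged into one kernel-verified Lean document; each statement's English description precedes it below -/
import Mathlib

section
/- Let g be a finite-dimensional real Lie algebra with an invariant inner product B_g, let h, l be subalgebras of g with g = h + l, let A = l^⊥ and C = (h ∩ l)^⊥ ∩ h. Let k be a Lie algebra and V ⊆ k a subspace, and suppose [·,·]_h : V × V → h is a bilinear map. Then the condition 'for all nonzero X ∈ A and all nonzero Y ∈ V there exists Z ∈ V with B_g(X, [Y,Z]_h) ≠ 0' holds if and only if the condition 'for all nonzero X ∈ C and all nonzero Y ∈ V there exists Z ∈ V with B_g(X, [Y,Z]_h) ≠ 0' holds. -/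
/-- Lemma 1 of the paper: with `A = lᗮ` and `C = (h ∩ l)ᗮ ∩ h` (orthogonal
complements with respect to a positive-definite invariant bilinear form `B` on `g`),
`g = h + l`, and a bilinear map `br : V × V → h` on a subspace `V` of a Lie algebra `k`,
the fatness condition over `A` is equivalent to the fatness condition over `C`. -/
theorem stmt5 {g k : Type*} [LieRing g] [LieAlgebra ℝ g] [Module.Finite ℝ g]
    [LieRing k] [LieAlgebra ℝ k]
    (B : g →ₗ[ℝ] g →ₗ[ℝ] ℝ)
    (hBpos : ∀ x : g, x ≠ 0 → 0 < B x x)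
    (hBsymm : ∀ x y : g, B x y = B y x)
    (hBinv : ∀ x y z : g, B ⁅x, y⁆ z = B x ⁅y, z⁆)
    (h l : LieSubalgebra ℝ g)
    (hsum : (h : Submodule ℝ g) ⊔ (l : Submodule ℝ g) = ⊤)
    (V : Submodule ℝ k)
    (br : V →ₗ[ℝ] V →ₗ[ℝ] g)
    (hbr : ∀ Y Z : V, br Y Z ∈ h) :
    -- fatness over A = lᗮ
    ((∀ X : g, X ≠ 0 → (∀ y ∈ l, B X y = 0) →
        ∀ Y : V, Y ≠ 0 → ∃ Z : V, B X (br Y Z) ≠ 0) ↔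
     -- fatness over C = (h ∩ l)ᗮ ⊓ h
     (∀ X : g, X ≠ 0 → X ∈ h → (∀ y : g, y ∈ h → y ∈ l → B X y = 0) →
        ∀ Y : V, Y ≠ 0 → ∃ Z : V, B X (br Y Z) ≠ 0)) := by
  letI core : InnerProductSpace.Core ℝ g :=
    { inner := fun x y => B x y
      conj_inner_symm := fun x y => by simpa using hBsymm y x
      re_inner_nonneg := fun x => by
        rcases eq_or_ne x 0 with rfl | hx
        · simp
        · exact le_of_lt (by simpa using hBpos x hx)
      add_left := fun x y z => by simp
      smul_left := fun x y r => by simp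
      definite := fun x hx => by
        by_contra hne
        exact absurd hx (ne_of_gt (hBpos x hne)) }
  letI := core.toNormedAddCommGroup
  letI := InnerProductSpace.ofCore core.toCore
  have hip : ∀ x y : g, (inner ℝ x y : ℝ) = B x y := fun _ _ => rfl
  haveI : FiniteDimensional ℝ g := ‹Module.Finite ℝ g›
  -- key : (h ⊓ l)ᗮ = hᗮ ⊔ lᗮ
  have key : ((h : Submodule ℝ g) ⊓ (l : Submodule ℝ g))ᗮ
      = (h : Submodule ℝ g)ᗮ ⊔ (l : Submodule ℝ g)ᗮ := by
    have h1 : ((h : Submodule ℝ g)ᗮ ⊔ (l : Submodule ℝ g)ᗮ)ᗮ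
        = (h : Submodule ℝ g) ⊓ (l : Submodule ℝ g) := by
      rw [← Submodule.inf_orthogonal, Submodule.orthogonal_orthogonal,
        Submodule.orthogonal_orthogonal]
    rw [← h1, Submodule.orthogonal_orthogonal]
  have horthmem : ∀ (K : Submodule ℝ g) (x : g), x ∈ Kᗮ ↔ ∀ y ∈ K, B x y = 0 := by
    intro K x
    rw [Submodule.mem_orthogonal]
    constructor
    · intro hx y hy; rw [hBsymm]; exact hx y hy
    · intro hx y hy; rw [hip y x, hBsymm]; exact hx y hy
  constructor
  · -- A-fatness → C-fatness
    intro hA X hX hXh hXC Y hY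
    -- X ∈ (h ⊓ l)ᗮ = hᗮ ⊔ lᗮ
    have hXmem : X ∈ (h : Submodule ℝ g)ᗮ ⊔ (l : Submodule ℝ g)ᗮ := by
      rw [← key, horthmem]
      intro y hy
      exact hXC y hy.1 hy.2
    obtain ⟨u, hu, X', hX', rfl⟩ := Submodule.mem_sup.mp hXmem
    have hX'l : ∀ y ∈ l, B X' y = 0 := (horthmem _ _).mp hX'
    have hX'ne : X' ≠ 0 := by
      rintro rfl
      rw [add_zero] at hX hXh
      exact absurd ((horthmem _ _).mp hu _ hXh) (ne_of_gt (hBpos _ hX))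
    obtain ⟨Z, hZ⟩ := hA X' hX'ne hX'l Y hY
    refine ⟨Z, ?_⟩
    have hu' : B u (br Y Z) = 0 := (horthmem _ _).mp hu _ (hbr Y Z)
    simpa [hu'] using hZ
  · -- C-fatness → A-fatness
    intro hC X hX hXl Y hY
    -- decompose X along h ⊔ hᗮ = ⊤
    have : X ∈ (h : Submodule ℝ g) ⊔ (h : Submodule ℝ g)ᗮ := by
      rw [Submodule.sup_orthogonal_of_hasOrthogonalProjection]; trivial
    obtain ⟨Xh, hXh, u, hu, rfl⟩ := Submodule.mem_sup.mp this
    have huh : ∀ y ∈ h, B u y = 0 := (horthmem _ _).mp hu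
    have hXhC : ∀ y : g, y ∈ h → y ∈ l → B Xh y = 0 := by
      intro y hyh hyl
      have h1 : B (Xh + u) y = 0 := hXl y hyl
      have h2 : B u y = 0 := huh y hyh
      have := h1
      simp only [map_add, LinearMap.add_apply] at this
      linarith
    have hXhne : Xh ≠ 0 := by
      rintro rfl
      have hul : ∀ y ∈ l, B u y = 0 := by
        intro y hy
        have := hXl y hy
        simpa using this
      have : (0 + u) ∈ ((h : Submodule ℝ g) ⊔ (l : Submodule ℝ g))ᗮ := by
        rw [← Submodule.inf_orthogonal]
        exact ⟨by simpa using (horthmem _ u).mpr (huh), by simpa using (horthmem _ u).mpr hul⟩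
      rw [hsum] at this
      have h0 : (0 + u : g) = 0 := by
        have := (horthmem _ _).mp this (0 + u) trivial
        by_contra hne
        exact absurd this (ne_of_gt (hBpos _ hne))
      exact hX h0
    obtain ⟨Z, hZ⟩ := hC Xh hXhne hXh hXhC Y hY
    refine ⟨Z, ?_⟩
    have hu' : B u (br Y Z) = 0 := huh _ (hbr Y Z)
    simp only [map_add, LinearMap.add_apply]
    intro hcon
    apply hZ
    linarith
end

section
/- Let G be a compact connected Lie group with Lie algebra g, and H, L closed connected subgroups with Lie algebras h, l. If g = h + l (as vector spaces), then G = H·L, i.e., every element of G is a product of an element of H and an element of L. -/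
open Matrix

/-- The Lie algebra of a closed subgroup of `GL(n, ℝ)`: all matrices `X` such that the
one-parameter group `t ↦ exp(tX)` lies in the subgroup. -/
def lieAlgebraOf {n : ℕ} (H : Subgroup (GL (Fin n) ℝ)) :
    Set (Matrix (Fin n) (Fin n) ℝ) :=
  {X | ∀ t : ℝ, ∃ u ∈ H,
    (u : Matrix (Fin n) (Fin n) ℝ) = NormedSpace.exp (t • X)}

set_option synthInstance.maxHeartbeats 1000000
set_option maxHeartbeats 4000000

section Stmt13Aux

open NormedSpace Filter Topology Set

attribute [local instance] Matrix.linftyOpSemiNormedRing Matrix.linftyOpNormedRing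
  Matrix.linftyOpNormedAlgebra

variable {n : ℕ}
local notation "M" => Matrix (Fin n) (Fin n) ℝ

noncomputable def pexp {k : ℕ} (W : Fin k → M) (c : Fin k → ℝ) : M :=
  (List.ofFn fun i => exp (c i • W i)).prod

noncomputable def dlin {k : ℕ} (W : Fin k → M) : (Fin k → ℝ) →L[ℝ] M :=
  ∑ i, (ContinuousLinearMap.proj i).smulRight (W i)

lemma dlin_apply {k : ℕ} (W : Fin k → M) (c : Fin k → ℝ) :
    dlin W c = ∑ i, c i • W i := by
  simp [dlin]

lemma pexp_zero {k : ℕ} (W : Fin k → M) : pexp W 0 = 1 := by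
  simp [pexp]

lemma pexp_succ {k : ℕ} (W : Fin (k+1) → M) (c : Fin (k+1) → ℝ) :
    pexp W c = exp (c 0 • W 0) * pexp (W ∘ Fin.succ) (c ∘ Fin.succ) := by
  simp [pexp, List.ofFn_succ, Function.comp]

lemma pexp_mem {K : Subgroup (GL (Fin n) ℝ)} : ∀ {k : ℕ} (W : Fin k → M),
    (∀ i, W i ∈ lieAlgebraOf K) → ∀ c, ∃ u ∈ K, (u : M) = pexp W c := by
  intro k
  induction k with
  | zero => exact fun W _ c => ⟨1, K.one_mem, by simp [pexp]⟩
  | succ k ih =>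
    intro W hW c
    obtain ⟨u0, hu0, hval0⟩ := hW 0 (c 0)
    obtain ⟨u, hu, hval⟩ := ih (W ∘ Fin.succ) (fun i => hW i.succ) (c ∘ Fin.succ)
    exact ⟨u0 * u, K.mul_mem hu0 hu, by rw [pexp_succ, Units.val_mul, hval0, hval]⟩

lemma hasStrictFDerivAt_pexp : ∀ {k : ℕ} (W : Fin k → M),
    HasStrictFDerivAt (pexp W) (dlin W) 0 := by
  intro k
  induction k with
  | zero =>
    intro W
    have h1 : pexp W = fun _ => (1 : M) := funext fun c => by simp [pexp]
    have h2 : dlin W = 0 := by ext c; simp [dlin_apply]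
    rw [h1, h2]; exact hasStrictFDerivAt_const _ _
  | succ k ih =>
    intro W
    set ℓ : (Fin (k+1) → ℝ) →L[ℝ] M := (ContinuousLinearMap.proj 0).smulRight (W 0) with hℓ
    have hf : HasStrictFDerivAt (fun c : Fin (k+1) → ℝ => exp (c 0 • W 0)) ℓ 0 := by
      have h0 : (ℓ : (Fin (k+1) → ℝ) → M) 0 = 0 := by simp
      have he : HasStrictFDerivAt (exp) (1 : M →L[ℝ] M) (ℓ 0) := by
        rw [h0]; exact hasStrictFDerivAt_exp_zero
      have := he.comp (0 : Fin (k+1) → ℝ) ℓ.hasStrictFDerivAt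
      exact this.congr_fderiv (ContinuousLinearMap.id_comp ℓ)
    set π : (Fin (k+1) → ℝ) →L[ℝ] (Fin k → ℝ) :=
      ContinuousLinearMap.pi (fun i : Fin k => ContinuousLinearMap.proj i.succ) with hπ
    have hπ0 : (π : (Fin (k+1) → ℝ) → (Fin k → ℝ)) 0 = 0 := by simp
    have hg : HasStrictFDerivAt (fun c : Fin (k+1) → ℝ => pexp (W ∘ Fin.succ) (c ∘ Fin.succ))
        ((dlin (W ∘ Fin.succ)).comp π) 0 := by
      have hi : HasStrictFDerivAt (pexp (W ∘ Fin.succ)) (dlin (W ∘ Fin.succ)) (π 0) := by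
        rw [hπ0]; exact ih (W ∘ Fin.succ)
      exact hi.comp (0 : Fin (k+1) → ℝ) π.hasStrictFDerivAt
    have h := hf.mul' hg
    have heq : (fun c : Fin (k+1) → ℝ =>
        exp (c 0 • W 0) * pexp (W ∘ Fin.succ) (c ∘ Fin.succ)) = pexp W :=
      funext fun c => (pexp_succ W c).symm
    rw [show ((fun c : Fin (k+1) → ℝ => exp (c 0 • W 0)) * fun c => pexp (W ∘ Fin.succ) (c ∘ Fin.succ)) = pexp W from heq] at h
    refine h.congr_fderiv ?_
    ext c : 1
    show exp ((0 : Fin (k+1) → ℝ) 0 • W 0) * dlin (W ∘ Fin.succ) (π c) +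
      ℓ c * pexp (W ∘ Fin.succ) ((0 : Fin (k+1) → ℝ) ∘ Fin.succ) = dlin W c
    simp [pexp_zero, hℓ, hπ, smul_eq_mul, dlin_apply, Fin.sum_univ_succ]
    abel

noncomputable def phi {a b : ℕ} (WH : Fin a → M) (WL : Fin b → M) (m : Submodule ℝ M)
    (e : (Fin a → ℝ) × (Fin b → ℝ) × m) : M :=
  pexp WH e.1 * (pexp WL e.2.1 * exp (e.2.2 : M))

noncomputable def Dphi {a b : ℕ} (WH : Fin a → M) (WL : Fin b → M) (m : Submodule ℝ M) :
    ((Fin a → ℝ) × (Fin b → ℝ) × m) →L[ℝ] M :=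
  (dlin WH).comp (ContinuousLinearMap.fst ℝ _ _) +
  ((dlin WL).comp ((ContinuousLinearMap.fst ℝ _ _).comp (ContinuousLinearMap.snd ℝ _ _)) +
   m.subtypeL.comp ((ContinuousLinearMap.snd ℝ _ _).comp (ContinuousLinearMap.snd ℝ _ _)))

lemma phi_zero {a b : ℕ} (WH : Fin a → M) (WL : Fin b → M) (m : Submodule ℝ M) :
    phi WH WL m 0 = 1 := by
  simp [phi, pexp_zero]

lemma Dphi_apply {a b : ℕ} (WH : Fin a → M) (WL : Fin b → M) (m : Submodule ℝ M)
    (e : (Fin a → ℝ) × (Fin b → ℝ) × m) :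
    Dphi WH WL m e = dlin WH e.1 + (dlin WL e.2.1 + (e.2.2 : M)) := by
  simp [Dphi]

lemma hasStrictFDerivAt_phi {a b : ℕ} (WH : Fin a → M) (WL : Fin b → M) (m : Submodule ℝ M) :
    HasStrictFDerivAt (phi WH WL m) (Dphi WH WL m) 0 := by
  set E := (Fin a → ℝ) × (Fin b → ℝ) × m
  set p1 : E →L[ℝ] (Fin a → ℝ) := ContinuousLinearMap.fst ℝ _ _
  set p2 : E →L[ℝ] (Fin b → ℝ) :=
    (ContinuousLinearMap.fst ℝ _ _).comp (ContinuousLinearMap.snd ℝ _ _)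
  set p3 : E →L[ℝ] m := (ContinuousLinearMap.snd ℝ _ _).comp (ContinuousLinearMap.snd ℝ _ _)
  have h1 : HasStrictFDerivAt (fun e : E => pexp WH e.1) ((dlin WH).comp p1) 0 := by
    have hi : HasStrictFDerivAt (pexp WH) (dlin WH) (p1 0) := by
      rw [map_zero]; exact hasStrictFDerivAt_pexp WH
    exact hi.comp 0 p1.hasStrictFDerivAt
  have h2 : HasStrictFDerivAt (fun e : E => pexp WL e.2.1) ((dlin WL).comp p2) 0 := by
    have hi : HasStrictFDerivAt (pexp WL) (dlin WL) (p2 0) := by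
      rw [map_zero]; exact hasStrictFDerivAt_pexp WL
    exact hi.comp 0 p2.hasStrictFDerivAt
  have h3 : HasStrictFDerivAt (fun e : E => exp (e.2.2 : M)) (m.subtypeL.comp p3) 0 := by
    have he : HasStrictFDerivAt (exp) (1 : M →L[ℝ] M) ((m.subtypeL.comp p3) 0) := by
      rw [map_zero]; exact hasStrictFDerivAt_exp_zero
    have h := he.comp 0 (m.subtypeL.comp p3).hasStrictFDerivAt
    exact h.congr_fderiv (ContinuousLinearMap.id_comp _)
  have h23 := h2.mul' h3
  have h := h1.mul' h23
  have heq : (fun e : E => pexp WH e.1 * (pexp WL e.2.1 * exp (e.2.2 : M))) = phi WH WL m := rfl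
  rw [show ((fun e : E => pexp WH e.1) * ((fun e : E => pexp WL e.2.1) * fun e : E => exp (e.2.2 : M))) = phi WH WL m from heq] at h
  have hD : Dphi WH WL m =
      (pexp WH (0 : E).1 • (pexp WL (0 : E).2.1 • m.subtypeL.comp p3 +
        ((dlin WL).comp p2).smulRight (exp ((0 : E).2.2 : M))) +
      ((dlin WH).comp p1).smulRight (pexp WL (0 : E).2.1 * exp ((0 : E).2.2 : M))) := by
    apply ContinuousLinearMap.ext
    intro e
    simp only [Prod.fst_zero, Prod.snd_zero, pexp_zero, Submodule.coe_zero, exp_zero, mul_one,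
      one_smul, ContinuousLinearMap.add_apply, ContinuousLinearMap.smulRight_apply,
      ContinuousLinearMap.coe_comp', Function.comp_apply, smul_eq_mul, Dphi,
      ContinuousLinearMap.coe_fst', ContinuousLinearMap.coe_snd', Submodule.coe_subtypeL',
      Submodule.coe_subtype]
    simp only [p1, p2, p3, ContinuousLinearMap.coe_comp', Function.comp_apply,
      ContinuousLinearMap.coe_fst', ContinuousLinearMap.coe_snd']
    abel
  rw [hD]
  exact h

lemma range_Dphi_top {a b : ℕ} (WH : Fin a → M) (WL : Fin b → M) (m : Submodule ℝ M)
    (htop : Submodule.span ℝ (Set.range WH) ⊔ (Submodule.span ℝ (Set.range WL) ⊔ m) = ⊤) :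
    (Dphi WH WL m).range = ⊤ := by
  rw [eq_top_iff, ← htop]
  refine sup_le ?_ (sup_le ?_ ?_)
  · rw [Submodule.span_le]
    rintro x ⟨i, rfl⟩
    refine ⟨(Pi.single i 1, 0, 0), ?_⟩
    simp [Dphi_apply, dlin_apply, Pi.single_apply]
  · rw [Submodule.span_le]
    rintro x ⟨i, rfl⟩
    refine ⟨(0, Pi.single i 1, 0), ?_⟩
    simp [Dphi_apply, dlin_apply, Pi.single_apply]
  · intro x hx
    refine ⟨(0, 0, ⟨x, hx⟩), ?_⟩
    simp [Dphi_apply, dlin_apply]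

lemma exists_unit_exp_neg {u : GL (Fin n) ℝ} {A : M} (h : (u : M) = exp A) :
    ((u⁻¹ : GL (Fin n) ℝ) : M) = exp (-A) := by
  have h1 : exp A * exp (-A) = 1 := by
    rw [← Matrix.exp_add_of_commute A (-A) (Commute.neg_right (Commute.refl A))]
    simp
  calc ((u⁻¹ : GL (Fin n) ℝ) : M) = ((u⁻¹ : GL (Fin n) ℝ) : M) * (exp A * exp (-A)) := by
        rw [h1, mul_one]
    _ = (((u⁻¹ : GL (Fin n) ℝ) : M) * (u : M)) * exp (-A) := by rw [h, mul_assoc]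
    _ = exp (-A) := by rw [Units.inv_mul, one_mul]

lemma local_lemma (G H L : Subgroup (GL (Fin n) ℝ))
    (hGcpt : IsCompact (G : Set (GL (Fin n) ℝ)))
    (hHG : H ≤ G) (hLG : L ≤ G)
    (hsum : ∀ X ∈ lieAlgebraOf G, ∃ Y ∈ lieAlgebraOf H, ∃ Z ∈ lieAlgebraOf L, X = Y + Z) :
    ∃ ε > 0, ∀ x : GL (Fin n) ℝ, x ∈ G → dist ((x : M)) 1 < ε →
      ∃ a ∈ H, ∃ b ∈ L, x = a * b := by
  classical
  by_contra hcon
  push_neg at hcon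
  -- choose spanning families
  obtain ⟨sH, hsHsub, hsHspan, hsHind⟩ := exists_linearIndependent ℝ (lieAlgebraOf H)
  obtain ⟨sL, hsLsub, hsLspan, hsLind⟩ := exists_linearIndependent ℝ (lieAlgebraOf L)
  have hsHfin : sH.Finite := hsHind.set_finite_of_isNoetherian
  have hsLfin : sL.Finite := hsLind.set_finite_of_isNoetherian
  set aN := hsHfin.toFinset.card with haN
  set bN := hsLfin.toFinset.card with hbN
  set eH := hsHfin.toFinset.equivFin with heH
  set eL := hsLfin.toFinset.equivFin with heL
  set WH : Fin aN → M := fun i => ((eH.symm i : hsHfin.toFinset) : M) with hWHdef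
  set WL : Fin bN → M := fun i => ((eL.symm i : hsLfin.toFinset) : M) with hWLdef
  have hWHrange : Set.range WH = sH := by
    ext z; constructor
    · rintro ⟨i, rfl⟩
      exact hsHfin.mem_toFinset.mp (eH.symm i).2
    · intro hz
      exact ⟨eH ⟨z, hsHfin.mem_toFinset.mpr hz⟩, by simp [hWHdef]⟩
  have hWLrange : Set.range WL = sL := by
    ext z; constructor
    · rintro ⟨i, rfl⟩
      exact hsLfin.mem_toFinset.mp (eL.symm i).2
    · intro hz
      exact ⟨eL ⟨z, hsLfin.mem_toFinset.mpr hz⟩, by simp [hWLdef]⟩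
  have hWHmem : ∀ i, WH i ∈ lieAlgebraOf H := fun i =>
    hsHsub (hsHfin.mem_toFinset.mp (eH.symm i).2)
  have hWLmem : ∀ i, WL i ∈ lieAlgebraOf L := fun i =>
    hsLsub (hsLfin.mem_toFinset.mp (eL.symm i).2)
  set V : Submodule ℝ M := Submodule.span ℝ (Set.range WH) ⊔ Submodule.span ℝ (Set.range WL)
    with hV
  obtain ⟨m, hm⟩ := Submodule.exists_isCompl V
  have htop : Submodule.span ℝ (Set.range WH) ⊔ (Submodule.span ℝ (Set.range WL) ⊔ m) = ⊤ := by
    rw [← sup_assoc, ← hV]; exact hm.sup_eq_top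
  have hφ := hasStrictFDerivAt_phi WH WL m
  have hmap := hφ.map_nhds_eq_of_surj (range_Dphi_top WH WL m htop)
  rw [phi_zero] at hmap
  -- extract a bad sequence
  have key : ∀ k : ℕ, ∃ x : GL (Fin n) ℝ, x ∈ G ∧
      (∀ a' ∈ H, ∀ b' ∈ L, x ≠ a' * b') ∧
      ∃ e : (Fin aN → ℝ) × (Fin bN → ℝ) × m,
        ‖e‖ < 1/(k+1) ∧ phi WH WL m e = (x : M) := by
    intro k
    have hball : phi WH WL m '' Metric.ball 0 (1/(k+1)) ∈ 𝓝 (1 : M) := by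
      have hmap' : Filter.map (phi WH WL m) (𝓝 0) = 𝓝 (1 : M) := hmap
      rw [← hmap']
      exact Filter.image_mem_map (Metric.ball_mem_nhds 0 (by positivity))
    obtain ⟨δ, hδpos, hδ⟩ := Metric.mem_nhds_iff.mp hball
    obtain ⟨x, hxG, hxd, hxP⟩ := hcon δ hδpos
    have hx1 : (x : M) ∈ Metric.ball (1 : M) δ := by rwa [Metric.mem_ball]
    obtain ⟨e, he, hphie⟩ := hδ hx1
    exact ⟨x, hxG, hxP, e, by simpa [Metric.mem_ball, dist_zero_right] using he, hphie⟩
  choose x hxG hxP e hen hphie using key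
  choose uH huH huHval using fun k => pexp_mem WH hWHmem ((e k).1)
  choose uL huL huLval using fun k => pexp_mem WL hWLmem ((e k).2.1)
  set Y : ℕ → M := fun k => ((e k).2.2 : M) with hYdef
  have hYm : ∀ k, Y k ∈ m := fun k => (e k).2.2.2
  have hYnorm : ∀ k, ‖Y k‖ ≤ 1/(k+1) := by
    intro k
    have h1 : ‖Y k‖ = ‖(e k).2.2‖ := rfl
    calc ‖Y k‖ = ‖(e k).2.2‖ := rfl
      _ ≤ ‖(e k).2‖ := norm_snd_le _
      _ ≤ ‖e k‖ := norm_snd_le _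
      _ ≤ 1/(k+1) := (hen k).le
  have hYlim : Filter.Tendsto Y Filter.atTop (𝓝 0) := by
    apply tendsto_zero_iff_norm_tendsto_zero.mpr
    exact squeeze_zero (fun k => norm_nonneg _) hYnorm
      tendsto_one_div_add_atTop_nhds_zero_nat
  have hYne : ∀ k, Y k ≠ 0 := by
    intro k hY0
    refine hxP k (uH k) (huH k) (uL k) (huL k) ?_
    apply Units.ext
    rw [← hphie k]
    show pexp WH (e k).1 * (pexp WL (e k).2.1 * exp (Y k)) = ((uH k * uL k : GL (Fin n) ℝ) : M)
    rw [hY0, exp_zero, mul_one, Units.val_mul, huHval, huLval]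
  set g : ℕ → GL (Fin n) ℝ := fun k => (uH k * uL k)⁻¹ * x k with hgdef
  have hgG : ∀ k, g k ∈ G := fun k =>
    G.mul_mem (G.inv_mem (G.mul_mem (hHG (huH k)) (hLG (huL k)))) (hxG k)
  have hgval : ∀ k, ((g k : GL (Fin n) ℝ) : M) = exp (Y k) := by
    intro k
    have h1 : (x k : M) = ((uH k * uL k : GL (Fin n) ℝ) : M) * exp (Y k) := by
      rw [← hphie k]
      show pexp WH (e k).1 * (pexp WL (e k).2.1 * exp (Y k)) = _
      rw [Units.val_mul, huHval, huLval, mul_assoc]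
    calc ((g k : GL (Fin n) ℝ) : M)
        = (((uH k * uL k)⁻¹ : GL (Fin n) ℝ) : M) * (x k : M) := Units.val_mul _ _
      _ = (((uH k * uL k)⁻¹ : GL (Fin n) ℝ) : M) *
          (((uH k * uL k : GL (Fin n) ℝ) : M) * exp (Y k)) := by rw [h1]
      _ = exp (Y k) := by rw [← mul_assoc, Units.inv_mul, one_mul]
  set B : ℕ → M := fun k => ‖Y k‖⁻¹ • Y k with hBdef
  set K' : Set M := Metric.sphere 0 1 ∩ (m : Set M) with hK'
  have hK'cpt : IsCompact K' :=
    (isCompact_sphere 0 1).inter_right m.closed_of_finiteDimensional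
  have hBK : ∀ k, B k ∈ K' := by
    intro k
    constructor
    · rw [mem_sphere_zero_iff_norm, hBdef]
      simp only [norm_smul, norm_inv, norm_norm]
      exact inv_mul_cancel₀ (norm_ne_zero_iff.mpr (hYne k))
    · exact m.smul_mem _ (hYm k)
  haveI : FirstCountableTopology M := inferInstanceAs (FirstCountableTopology (Fin n → Fin n → ℝ))
  obtain ⟨B₀, hB₀K, ψ, hψ, hψtend⟩ := hK'cpt.tendsto_subseq hBK
  have hYψlim : Filter.Tendsto (fun j => Y (ψ j)) Filter.atTop (𝓝 0) :=
    hYlim.comp hψ.tendsto_atTop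
  have hYψnormlim : Filter.Tendsto (fun j => ‖Y (ψ j)‖) Filter.atTop (𝓝 0) := by
    simpa using hYψlim.norm
  -- B₀ generates a one-parameter subgroup of G
  have key2 : ∀ t : ℝ, 0 ≤ t → ∃ u ∈ G, (u : M) = exp (t • B₀) := by
    intro t ht
    set N : ℕ → ℕ := fun j => ⌊t / ‖Y (ψ j)‖⌋₊ with hN
    have hr : Filter.Tendsto (fun j => (N j : ℝ) * ‖Y (ψ j)‖) Filter.atTop (𝓝 t) := by
      have hlow : Filter.Tendsto (fun j => t - ‖Y (ψ j)‖) Filter.atTop (𝓝 t) := by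
        have := hYψnormlim.const_sub t
        simpa using this
      refine tendsto_of_tendsto_of_tendsto_of_le_of_le hlow tendsto_const_nhds ?_ ?_
      · intro j
        have hpos : (0 : ℝ) < ‖Y (ψ j)‖ := norm_pos_iff.mpr (hYne (ψ j))
        have h2 : t / ‖Y (ψ j)‖ - 1 < (N j : ℝ) := Nat.sub_one_lt_floor _
        have := (mul_lt_mul_of_pos_right h2 hpos)
        rw [sub_mul, div_mul_cancel₀ _ hpos.ne', one_mul] at this
        show t - ‖Y (ψ j)‖ ≤ (N j : ℝ) * ‖Y (ψ j)‖
        linarith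
      · intro j
        have hpos : (0 : ℝ) < ‖Y (ψ j)‖ := norm_pos_iff.mpr (hYne (ψ j))
        have h2 : (N j : ℝ) ≤ t / ‖Y (ψ j)‖ := Nat.floor_le (div_nonneg ht hpos.le)
        show (N j : ℝ) * ‖Y (ψ j)‖ ≤ t
        calc (N j : ℝ) * ‖Y (ψ j)‖ ≤ (t / ‖Y (ψ j)‖) * ‖Y (ψ j)‖ :=
              mul_le_mul_of_nonneg_right h2 hpos.le
          _ = t := div_mul_cancel₀ _ hpos.ne'
    have hveq : ∀ j, (N j • Y (ψ j) : M) = ((N j : ℝ) * ‖Y (ψ j)‖) • B (ψ j) := by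
      intro j
      have hne : ‖Y (ψ j)‖ ≠ 0 := norm_ne_zero_iff.mpr (hYne (ψ j))
      rw [← Nat.cast_smul_eq_nsmul ℝ, mul_smul, hBdef]
      congr 1
      rw [smul_inv_smul₀ hne]
    have hlim : Filter.Tendsto (fun j => exp (N j • Y (ψ j))) Filter.atTop
        (𝓝 (exp (t • B₀))) := by
      have hv : Filter.Tendsto (fun j => (N j • Y (ψ j) : M)) Filter.atTop (𝓝 (t • B₀)) := by
        simp only [hveq]
        exact hr.smul hψtend
      exact (exp_continuous.tendsto _).comp hv
    have hmem : ∀ j, exp (N j • Y (ψ j)) ∈ (Units.val '' (G : Set (GL (Fin n) ℝ)) : Set M) := by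
      intro j
      rw [Matrix.exp_nsmul, ← hgval (ψ j), ← Units.val_pow_eq_pow_val]
      exact ⟨(g (ψ j)) ^ (N j), G.pow_mem (hgG (ψ j)) _, rfl⟩
    have hcl : IsClosed (Units.val '' (G : Set (GL (Fin n) ℝ)) : Set M) :=
      (hGcpt.image Units.continuous_val).isClosed
    have := hcl.mem_of_tendsto hlim (Filter.Eventually.of_forall hmem)
    obtain ⟨u, huG, huval⟩ := this
    exact ⟨u, huG, huval⟩
  have hBG : B₀ ∈ lieAlgebraOf G := by
    intro t
    rcases le_or_gt 0 t with ht | ht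
    · exact key2 t ht
    · obtain ⟨u, huG, huval⟩ := key2 (-t) (by linarith)
      refine ⟨u⁻¹, G.inv_mem huG, ?_⟩
      have := exists_unit_exp_neg huval
      rwa [← neg_smul, neg_neg] at this
  -- contradiction
  obtain ⟨Yh, hYh, Zl, hZl, hBsum⟩ := hsum B₀ hBG
  have hBV : B₀ ∈ V := by
    rw [hBsum]
    refine V.add_mem ?_ ?_
    · apply Submodule.mem_sup_left
      rw [hWHrange, hsHspan]
      exact Submodule.subset_span hYh
    · apply Submodule.mem_sup_right
      rw [hWLrange, hsLspan]
      exact Submodule.subset_span hZl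
  have hB0 : B₀ = 0 := (Submodule.disjoint_def.mp hm.disjoint) B₀ hBV hB₀K.2
  have hnorm1 : ‖B₀‖ = 1 := mem_sphere_zero_iff_norm.mp hB₀K.1
  rw [hB0] at hnorm1
  simp at hnorm1

lemma mainAux (G H L : Subgroup (GL (Fin n) ℝ))
    (hGcpt : IsCompact (G : Set (GL (Fin n) ℝ)))
    (hGconn : IsConnected (G : Set (GL (Fin n) ℝ)))
    (hHG : H ≤ G) (hLG : L ≤ G)
    (hHcl : IsClosed (H : Set (GL (Fin n) ℝ)))
    (hLcl : IsClosed (L : Set (GL (Fin n) ℝ)))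
    (hsum : ∀ X ∈ lieAlgebraOf G, ∃ Y ∈ lieAlgebraOf H, ∃ Z ∈ lieAlgebraOf L, X = Y + Z) :
    ∀ x ∈ G, ∃ a ∈ H, ∃ b ∈ L, x = a * b := by
  classical
  intro x hxG
  obtain ⟨ε, hεpos, hloc⟩ := local_lemma G H L hGcpt hHG hLG hsum
  set S : Set (GL (Fin n) ℝ) := {y | ∃ a ∈ H, ∃ b ∈ L, y = a * b} with hS
  have hHcpt : IsCompact (H : Set (GL (Fin n) ℝ)) :=
    hGcpt.of_isClosed_subset hHcl hHG
  have hLcpt : IsCompact (L : Set (GL (Fin n) ℝ)) :=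
    hGcpt.of_isClosed_subset hLcl hLG
  have hScpt : IsCompact S := by
    have hSeq : S = (fun p : GL (Fin n) ℝ × GL (Fin n) ℝ => p.1 * p.2) ''
        ((H : Set (GL (Fin n) ℝ)) ×ˢ (L : Set (GL (Fin n) ℝ))) := by
      ext y; constructor
      · rintro ⟨a, ha, b, hb, rfl⟩; exact ⟨(a, b), ⟨ha, hb⟩, rfl⟩
      · rintro ⟨⟨a, b⟩, ⟨ha, hb⟩, rfl⟩; exact ⟨a, ha, b, hb, rfl⟩
    rw [hSeq]
    exact (hHcpt.prod hLcpt).image continuous_mul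
  set U : Set (GL (Fin n) ℝ) :=
    (fun y : GL (Fin n) ℝ => (y : M)) ⁻¹' Metric.ball (1 : M) ε with hU
  have hUopen : IsOpen U := Metric.isOpen_ball.preimage Units.continuous_val
  have h1U : (1 : GL (Fin n) ℝ) ∈ U := by
    simp only [hU, Set.mem_preimage, Metric.mem_ball, Units.val_one]
    simpa using hεpos
  set O : Set (GL (Fin n) ℝ) := ⋃ (p : GL (Fin n) ℝ × GL (Fin n) ℝ)
    (_ : p.1 ∈ H ∧ p.2 ∈ L), (fun y => p.1 * y * p.2) '' U with hO
  have hOopen : IsOpen O := by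
    refine isOpen_iUnion fun p => isOpen_iUnion fun hp => ?_
    have hmap : IsOpenMap (fun y : GL (Fin n) ℝ => p.1 * y * p.2) := by
      have : (fun y : GL (Fin n) ℝ => p.1 * y * p.2)
          = (fun y => y * p.2) ∘ (fun y => p.1 * y) := rfl
      rw [this]
      exact (isOpenMap_mul_right p.2).comp (isOpenMap_mul_left p.1)
    exact hmap U hUopen
  have hSO : S ⊆ O := by
    rintro y ⟨a, ha, b, hb, rfl⟩
    refine Set.mem_iUnion.mpr ⟨(a, b), Set.mem_iUnion.mpr ⟨⟨ha, hb⟩, ⟨1, h1U, ?_⟩⟩⟩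
    simp
  have hGOS : ∀ y ∈ G, y ∈ O → y ∈ S := by
    intro y hyG hyO
    obtain ⟨p, hp, u, huU, hueq⟩ := by
      simpa only [hO, Set.mem_iUnion] using hyO
    have huG : u ∈ G := by
      have : u = p.1⁻¹ * y * p.2⁻¹ := by
        rw [← hueq]; group
      rw [this]
      exact G.mul_mem (G.mul_mem (G.inv_mem (hHG hp.1)) hyG) (G.inv_mem (hLG hp.2))
    obtain ⟨aa, haa, bb, hbb, hu⟩ := hloc u huG (by simpa [hU, Metric.mem_ball] using huU)
    refine ⟨p.1 * aa, H.mul_mem hp.1 haa, bb * p.2, L.mul_mem hbb hp.2, ?_⟩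
    rw [← hueq, hu]
    group
  by_contra hxS'
  have hcover : (G : Set (GL (Fin n) ℝ)) ⊆ O ∪ Sᶜ := by
    intro y hy
    by_cases hyS : y ∈ S
    · exact Or.inl (hSO hyS)
    · exact Or.inr hyS
  have hne1 : ((G : Set (GL (Fin n) ℝ)) ∩ O).Nonempty :=
    ⟨1, G.one_mem, hSO ⟨1, H.one_mem, 1, L.one_mem, (one_mul 1).symm⟩⟩
  have hne2 : ((G : Set (GL (Fin n) ℝ)) ∩ Sᶜ).Nonempty := ⟨x, hxG, fun hxS => hxS' hxS⟩
  obtain ⟨y, hyG, hyO, hySc⟩ := hGconn.isPreconnected O Sᶜ hOopen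
    hScpt.isClosed.isOpen_compl hcover hne1 hne2
  exact hySc (hGOS y hyG hyO)

end Stmt13Aux

/-- `G` a compact connected (matrix) Lie group, `H`, `L` closed connected
subgroups with Lie algebras `h`, `l`.  If `g = h + l` as vector spaces, then `G = H·L`. -/
theorem stmt13 {n : ℕ} (G H L : Subgroup (GL (Fin n) ℝ))
    (hGcpt : IsCompact (G : Set (GL (Fin n) ℝ)))
    (hGconn : IsConnected (G : Set (GL (Fin n) ℝ)))
    (hHG : H ≤ G) (hLG : L ≤ G)
    (hHcl : IsClosed (H : Set (GL (Fin n) ℝ)))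
    (hHconn : IsConnected (H : Set (GL (Fin n) ℝ)))
    (hLcl : IsClosed (L : Set (GL (Fin n) ℝ)))
    (hLconn : IsConnected (L : Set (GL (Fin n) ℝ)))
    (hsum : ∀ X ∈ lieAlgebraOf G, ∃ Y ∈ lieAlgebraOf H, ∃ Z ∈ lieAlgebraOf L, X = Y + Z) :
    ∀ x ∈ G, ∃ a ∈ H, ∃ b ∈ L, x = a * b :=
  mainAux G H L hGcpt hGconn hHG hLG hHcl hLcl hsum
end
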